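/- arXiv:1301.6408 — 2 statements merged into one kernel-verified Lean document; each statement's English description precedes it below -/
import Mathlib

section
/- Let X be a finite set and x : Fin n → X a sequence, with counts N(a) = #{t : x t = a}. Then n·log n − ∑_{a ∈ X} N(a)·log(N(a)) ≥ log(n! / ∏_{a ∈ X} N(a)!), interpreting 0·log 0 = 0. -/
theorem type_class_log_bound {X : Type*} [Fintype X] [DecidableEq X]
    (n : ℕ) (x : Fin n → X) (N : X → ℕ)
    (hN : ∀ a, N a = (Finset.univ.filter (fun t => x t = a)).card) :
    Real.log ((n.factorial : ℝ) / ∏ a : X, ((N a).factorial : ℝ))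
      ≤ (n : ℝ) * Real.log n - ∑ a : X, (N a : ℝ) * Real.log (N a) := by
  have hsum : ∑ a : X, N a = n := by
    simp only [hN]
    have := Finset.card_eq_sum_card_fiberwise
      (s := (Finset.univ : Finset (Fin n))) (t := (Finset.univ : Finset X))
      (f := x) (fun t _ => Finset.mem_univ (x t))
    simpa using this.symm
  -- multinomial theorem: multinomial * ∏ N^N ≤ n^n
  have hmem : N ∈ Finset.piAntidiag (Finset.univ : Finset X) n := by
    rw [Finset.mem_piAntidiag]
    exact ⟨hsum, fun i _ => Finset.mem_univ i⟩
  have key : Nat.multinomial Finset.univ N * ∏ a : X, (N a) ^ (N a) ≤ n ^ n := by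
    calc Nat.multinomial Finset.univ N * ∏ a : X, (N a) ^ (N a)
        ≤ ∑ k ∈ Finset.piAntidiag (Finset.univ : Finset X) n,
            Nat.multinomial Finset.univ k * ∏ a : X, (N a) ^ (k a) :=
          Finset.single_le_sum (f := fun k => Nat.multinomial Finset.univ k * ∏ a : X, (N a) ^ (k a)) (fun k _ => Nat.zero_le _) hmem
      _ = (∑ a : X, N a) ^ n := (Finset.sum_pow_eq_sum_piAntidiag _ _ _).symm
      _ = n ^ n := by rw [hsum]
  -- rewrite LHS as log of multinomial
  have hprodpos : (0:ℝ) < ∏ a : X, ((N a).factorial : ℝ) := by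
    apply Finset.prod_pos
    intro a _
    exact_mod_cast (N a).factorial_pos
  have hdiv : ((n.factorial : ℝ) / ∏ a : X, ((N a).factorial : ℝ))
      = (Nat.multinomial Finset.univ N : ℝ) := by
    rw [div_eq_iff (ne_of_gt hprodpos)]
    have := Nat.multinomial_spec (Finset.univ : Finset X) N
    rw [hsum] at this
    push_cast [← this]
    ring
  rw [hdiv]
  have hmpos : (0:ℝ) < (Nat.multinomial Finset.univ N : ℝ) := by
    exact_mod_cast Nat.multinomial_pos _ _
  have hpow : ∀ m : ℕ, (0:ℝ) < (m:ℝ) ^ m := by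
    intro m
    rcases Nat.eq_zero_or_pos m with h | h
    · simp [h]
    · exact pow_pos (by exact_mod_cast h) m
  have hppos : (0:ℝ) < ∏ a : X, ((N a : ℝ)) ^ (N a) :=
    Finset.prod_pos fun a _ => hpow (N a)
  have hle : (Nat.multinomial Finset.univ N : ℝ)
      ≤ (n : ℝ) ^ n / ∏ a : X, ((N a : ℝ)) ^ (N a) := by
    rw [le_div_iff₀ hppos]
    exact_mod_cast key
  calc Real.log (Nat.multinomial Finset.univ N : ℝ)
      ≤ Real.log ((n : ℝ) ^ n / ∏ a : X, ((N a : ℝ)) ^ (N a)) :=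
        Real.log_le_log hmpos hle
    _ = (n : ℝ) * Real.log n - ∑ a : X, (N a : ℝ) * Real.log (N a) := by
        rw [Real.log_div (ne_of_gt (hpow n)) (ne_of_gt hppos), Real.log_pow,
          Real.log_prod (fun a _ => ne_of_gt (hpow (N a)))]
        simp [Real.log_pow]
end

section
/- Let k be a positive integer and (h_t) a non-decreasing positive real sequence. Among all sequences x₁,…,x_n over an alphabet of size k, the sum ∑_{t=1}^n 1/(N_{t−1}(x_t) + h_t) (where N_{t−1}(a) counts occurrences of a among x₁,…,x_{t−1}) is maximized by the round-robin sequence, for which N_{t−1}(x_t) = ⌊(t−1)/k⌋; hence for every sequence, ∑_{t=1}^n 1/(N_{t−1}(x_t) + h_t) ≤ ∑_{t=1}^n 1/(⌊(t−1)/k⌋ + h_t). -/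
open Finset

private lemma swap_ineq {u v : ℕ} (huv : u ≤ v) {g g' : ℝ} (hg : 0 < g) (hgg' : g ≤ g') :
    1/((v:ℝ)+g) + 1/((u:ℝ)+g') ≤ 1/((u:ℝ)+g) + 1/((v:ℝ)+g') := by
  have huv' : (u:ℝ) ≤ v := Nat.cast_le.2 huv
  have hu0 : (0:ℝ) ≤ u := Nat.cast_nonneg u
  have hg0 : 0 < g' := lt_of_lt_of_le hg hgg'
  have h1 : 0 < (u:ℝ)+g := by positivity
  have h2 : 0 < (v:ℝ)+g := by positivity
  have h3 : 0 < (u:ℝ)+g' := by positivity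
  have h4 : 0 < (v:ℝ)+g' := by positivity
  rw [div_add_div _ _ h2.ne' h3.ne', div_add_div _ _ h1.ne' h4.ne',
    div_le_div_iff₀ (by positivity) (by positivity)]
  nlinarith [mul_nonneg (sub_nonneg.2 huv') (sub_nonneg.2 hgg'), mul_pos h1 h2,
    mul_pos h3 h4, mul_pos (mul_pos h1 h2) (mul_pos h3 h4)]

private lemma key_lemma (k : ℕ) (hk : 0 < k) (h : ℕ → ℝ) (hpos : ∀ t, 0 < h t)
    (hmono : Monotone h) :
    ∀ n (c : ℕ → ℕ),
      (∀ j, ((Finset.Icc 1 n).filter (fun t => c t ≤ j)).card ≤ (j+1)*k) →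
      ∑ t ∈ Finset.Icc 1 n, 1 / ((c t : ℝ) + h t)
        ≤ ∑ t ∈ Finset.Icc 1 n, 1 / ((((t - 1) / k : ℕ) : ℝ) + h t) := by
  intro n
  induction n with
  | zero => intro c _; simp
  | succ n ih =>
    intro c hc
    obtain ⟨ts, htsmem, hmax⟩ :=
      (Finset.Icc 1 (n+1)).exists_max_image c ⟨n+1, by simp⟩
    have hts1 : ts ≤ n+1 := (Finset.mem_Icc.1 htsmem).2
    set csw : ℕ → ℕ := fun t => if t = ts then c (n+1) else if t = n+1 then c ts else c t
      with hcsw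
    have hsw_top : csw (n+1) = c ts := by
      by_cases hh : n+1 = ts
      · subst hh; simp [hcsw]
      · simp [hcsw, hh]
    -- Step A : swapping increases the sum
    have stepA : ∑ t ∈ Finset.Icc 1 (n+1), 1/((c t:ℝ) + h t)
        ≤ ∑ t ∈ Finset.Icc 1 (n+1), 1/((csw t:ℝ) + h t) := by
      by_cases hh : ts = n+1
      · apply le_of_eq
        apply Finset.sum_congr rfl
        intro t ht
        have : csw t = c t := by
          simp only [hcsw]
          split_ifs with h1 h2
          · rw [h1, hh]
          · rw [hh, h2]
          · rfl
        rw [this]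
      · have hmem2 : n+1 ∈ (Finset.Icc 1 (n+1)) \ {ts} := by
          simp [Finset.mem_sdiff, Ne.symm hh]
        rw [Finset.sum_eq_sum_sdiff_singleton_add htsmem,
            Finset.sum_eq_sum_sdiff_singleton_add hmem2,
            Finset.sum_eq_sum_sdiff_singleton_add htsmem (fun t => 1/((csw t:ℝ) + h t)),
            Finset.sum_eq_sum_sdiff_singleton_add hmem2 (fun t => 1/((csw t:ℝ) + h t))]
        have hrest : ∑ t ∈ ((Finset.Icc 1 (n+1)) \ {ts}) \ {n+1}, 1/((c t:ℝ) + h t)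
            = ∑ t ∈ ((Finset.Icc 1 (n+1)) \ {ts}) \ {n+1}, 1/((csw t:ℝ) + h t) := by
          apply Finset.sum_congr rfl
          intro t ht
          simp only [Finset.mem_sdiff, Finset.mem_singleton] at ht
          have h1 : t ≠ ts := ht.1.2
          have h2 : t ≠ n+1 := ht.2
          simp [hcsw, h1, h2]
        have hswts : csw ts = c (n+1) := by simp [hcsw]
        have hswn : csw (n+1) = c ts := hsw_top
        rw [hrest, hswts, hswn]
        have hkey := swap_ineq (hmax (n+1) (by simp)) (hpos ts) (hmono hts1)
        linarith
    -- count property for csw on [1,n]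
    have hcount' : ∀ j, ((Finset.Icc 1 n).filter (fun t => csw t ≤ j)).card ≤ (j+1)*k := by
      intro j
      have hle : ((Finset.Icc 1 n).filter (fun t => csw t ≤ j)).card
          ≤ ((Finset.Icc 1 (n+1)).filter (fun t => c t ≤ j)).card := by
        apply Finset.card_le_card_of_injOn (fun t => if t = ts then n+1 else t)
        · intro t ht
          simp only [Finset.mem_coe, Finset.mem_filter, Finset.mem_Icc] at ht ⊢
          obtain ⟨⟨ht1, ht2⟩, htj⟩ := ht
          by_cases h1 : t = ts
          · rw [if_pos h1]
            have hv : csw t = c (n+1) := by simp [hcsw, h1]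
            exact ⟨⟨by omega, le_refl _⟩, by rw [← hv]; exact htj⟩
          · rw [if_neg h1]
            have h2 : t ≠ n+1 := by omega
            have hv : csw t = c t := by simp [hcsw, h1, h2]
            exact ⟨⟨ht1, by omega⟩, by rw [← hv]; exact htj⟩
        · intro a ha b hb hab
          simp only [Finset.coe_filter, Set.mem_setOf_eq, Finset.mem_Icc] at ha hb
          dsimp only at hab
          by_cases h1 : a = ts <;> by_cases h2 : b = ts
          · omega
          · rw [if_pos h1, if_neg h2] at hab; omega
          · rw [if_neg h1, if_pos h2] at hab; omega
          · rwa [if_neg h1, if_neg h2] at hab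
      exact hle.trans (hc j)
    -- max count is at least n/k
    have hb : n / k ≤ c ts := by
      set m := n / k with hm
      by_contra hlt
      push_neg at hlt
      have hall : (Finset.Icc 1 (n+1)).filter (fun t => c t ≤ m - 1)
          = Finset.Icc 1 (n+1) := by
        apply Finset.filter_true_of_mem
        intro t ht
        have := hmax t ht
        omega
      have h2 := hc (m - 1)
      rw [hall, Nat.card_Icc] at h2
      have h3 : (m - 1 + 1) = m := by omega
      rw [h3] at h2
      have h4 : m * k ≤ n := Nat.div_mul_le_self n k
      have h5 := h2.trans h4
      omega
    -- assemble
    have hsplit : ∀ f : ℕ → ℝ, ∑ t ∈ Finset.Icc 1 (n+1), f t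
        = ∑ t ∈ Finset.Icc 1 n, f t + f (n+1) := fun f =>
      Finset.sum_Icc_succ_top (Nat.le_add_left 1 n) f
    have hih := ih csw hcount'
    have hlast : 1/((c ts : ℝ) + h (n+1)) ≤ 1/((((n+1-1)/k : ℕ):ℝ) + h (n+1)) := by
      have hh1 := hpos (n+1)
      apply one_div_le_one_div_of_le
      · positivity
      · have : ((n+1-1)/k : ℕ) ≤ c ts := by simpa using hb
        have := (Nat.cast_le (α := ℝ)).2 this
        linarith
    calc ∑ t ∈ Finset.Icc 1 (n+1), 1/((c t:ℝ) + h t)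
        ≤ ∑ t ∈ Finset.Icc 1 (n+1), 1/((csw t:ℝ) + h t) := stepA
      _ = ∑ t ∈ Finset.Icc 1 n, 1/((csw t:ℝ) + h t) + 1/((c ts:ℝ) + h (n+1)) := by
          rw [hsplit (fun t => 1/((csw t:ℝ) + h t)), hsw_top]
      _ ≤ ∑ t ∈ Finset.Icc 1 n, 1 / ((((t - 1) / k : ℕ) : ℝ) + h t)
            + 1/((((n+1-1)/k : ℕ):ℝ) + h (n+1)) := add_le_add hih hlast
      _ = ∑ t ∈ Finset.Icc 1 (n+1), 1 / ((((t - 1) / k : ℕ) : ℝ) + h t) := by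
          rw [hsplit (fun t => 1 / ((((t - 1) / k : ℕ) : ℝ) + h t))]

theorem round_robin_maximizes {X : Type*} [Fintype X] [DecidableEq X]
    (k : ℕ) (hcard : Fintype.card X = k) (hk : 0 < k)
    (h : ℕ → ℝ) (hpos : ∀ t, 0 < h t) (hmono : Monotone h)
    (n : ℕ) (x : ℕ → X) :
    ∑ t ∈ Finset.Icc 1 n,
        1 / ((((Finset.Ico 1 t).filter (fun i => x i = x t)).card : ℝ) + h t)
      ≤ ∑ t ∈ Finset.Icc 1 n, 1 / ((((t - 1) / k : ℕ) : ℝ) + h t) := by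
  set c : ℕ → ℕ := fun t => ((Finset.Ico 1 t).filter (fun i => x i = x t)).card with hc
  have hlt : ∀ a b, 1 ≤ a → a < b → x a = x b → c a < c b := by
    intro a b ha hab hx
    apply Finset.card_lt_card
    rw [Finset.ssubset_iff_of_subset]
    · exact ⟨a, by simp [Finset.mem_filter, Finset.mem_Ico, ha, hab, hx],
        by simp [Finset.mem_Ico]⟩
    · intro i hi
      simp only [Finset.mem_filter, Finset.mem_Ico] at hi ⊢
      exact ⟨⟨hi.1.1, hi.1.2.trans hab⟩, hi.2.trans (by rw [hx])⟩
  apply key_lemma k hk h hpos hmono n c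
  intro j
  have hle : ((Finset.Icc 1 n).filter (fun t => c t ≤ j)).card
      ≤ (Finset.univ (α := X) ×ˢ Finset.range (j+1)).card := by
    apply Finset.card_le_card_of_injOn (fun t => (x t, c t))
    · intro t ht
      simp only [Finset.mem_coe, Finset.mem_filter] at ht
      simp [Finset.mem_product, Nat.lt_succ_iff, ht.2]
    · intro a ha b hb hab
      simp only [Finset.coe_filter, Set.mem_setOf_eq, Finset.mem_Icc] at ha hb
      simp only [Prod.mk.injEq] at hab
      rcases lt_trichotomy a b with hlt' | heq | hlt'
      · exact absurd hab.2 (hlt a b ha.1.1 hlt' hab.1).ne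
      · exact heq
      · exact absurd hab.2.symm (hlt b a hb.1.1 hlt' hab.1.symm).ne
  rw [Finset.card_product, Finset.card_univ, hcard, Finset.card_range] at hle
  exact le_of_le_of_eq hle (Nat.mul_comm _ _)
end
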